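/- Let n₁ be a natural number and put n = n₁ + 4. If the polynomial (1 − t)^{n₁} (1 − t²)² has exactly n₁ + 3 nonzero coefficients, then n is a perfect square. -/

import Mathlib

open Polynomial

lemma coeff_one_sub_X_pow' (m : ℕ) :
    ∀ j, ((1 - X : Polynomial ℚ) ^ m).coeff j = (-1)^j * m.choose j := by
  induction m with
  | zero => intro j; cases j <;> simp [coeff_one]
  | succ m ih =>
    intro j
    have hstep : (1 - X : Polynomial ℚ)^(m+1) = (1-X)^m + ((1-X)^m * C (-1)) * X^1 := by
      rw [map_neg, map_one]; ring
    rw [hstep, coeff_add, coeff_mul_X_pow', coeff_mul_C]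
    cases j with
    | zero => simp [ih]
    | succ j =>
      simp only [Nat.add_sub_cancel, ih, Nat.choose_succ_succ, if_pos (by omega : 1 ≤ j+1)]
      push_cast
      ring

lemma coeff_main' (m : ℕ) (k : ℕ) :
    ((1 - X : Polynomial ℚ)^m * (1 + X)^2).coeff k =
      (-1)^k * m.choose k
      + 2 * (if 1 ≤ k then ((-1:ℚ))^(k-1) * m.choose (k-1) else 0)
      + (if 2 ≤ k then ((-1:ℚ))^(k-2) * m.choose (k-2) else 0) := by
  have hsplit : ((1 - X : Polynomial ℚ)^m * (1 + X)^2)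
      = (1-X)^m + ((1-X)^m * C 2) * X^1 + (1-X)^m * X^2 := by
    rw [show (C 2 : Polynomial ℚ) = 2 from map_ofNat _ 2]; ring
  rw [hsplit, coeff_add, coeff_add, coeff_mul_X_pow', coeff_mul_X_pow', coeff_mul_C,
    coeff_one_sub_X_pow']
  split_ifs with h1 h2'
  · rw [coeff_one_sub_X_pow', coeff_one_sub_X_pow']; ring
  · rw [coeff_one_sub_X_pow']; ring
  · omega
  · ring

/-- If the polynomial `(1 − t)^{n₁} (1 − t²)²` has exactly `n₁ + 3` nonzero coefficients,
then `n = n₁ + 4` is a perfect square. -/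
theorem stmt4 (n₁ : ℕ)
    (h : (((1 - X) ^ n₁ * (1 - X ^ 2) ^ 2 : Polynomial ℚ)).support.card = n₁ + 3) :
    IsSquare (n₁ + 4) := by
  set p : Polynomial ℚ := (1 - X) ^ n₁ * (1 - X ^ 2) ^ 2 with hp
  set m := n₁ + 2 with hm
  have hpform : p = (1 - X)^m * (1 + X)^2 := by rw [hp, hm]; ring
  have hcoeff : ∀ k, p.coeff k =
      (-1)^k * m.choose k
      + 2 * (if 1 ≤ k then ((-1:ℚ))^(k-1) * m.choose (k-1) else 0)
      + (if 2 ≤ k then ((-1:ℚ))^(k-2) * m.choose (k-2) else 0) := by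
    intro k; rw [hpform]; exact coeff_main' m k
  -- degree and endpoints
  have hq1 : (1 - X : Polynomial ℚ).natDegree = 1 := by
    rw [show (1 - X : Polynomial ℚ) = -(X - C 1) by rw [map_one]; ring,
      natDegree_neg, natDegree_X_sub_C]
  have hq2 : (1 + X : Polynomial ℚ).natDegree = 1 := by
    rw [show (1 + X : Polynomial ℚ) = X + C 1 by rw [map_one]; ring, natDegree_X_add_C]
  have hne1 : (1 - X : Polynomial ℚ) ≠ 0 := by
    intro hz; rw [hz] at hq1; simp at hq1
  have hne2 : (1 + X : Polynomial ℚ) ≠ 0 := by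
    intro hz; rw [hz] at hq2; simp at hq2
  have hp0 : p ≠ 0 := by
    rw [hpform]
    exact mul_ne_zero (pow_ne_zero _ hne1) (pow_ne_zero _ hne2)
  have hdeg : p.natDegree = n₁ + 4 := by
    rw [hpform, natDegree_mul (pow_ne_zero _ hne1) (pow_ne_zero _ hne2),
      natDegree_pow, natDegree_pow, hq1, hq2, hm]
    ring
  have hc0 : p.coeff 0 ≠ 0 := by
    rw [hcoeff 0]; norm_num
  have hctop : p.coeff (n₁ + 4) ≠ 0 := by
    rw [← hdeg, ← leadingCoeff]
    exact leadingCoeff_ne_zero.mpr hp0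
  -- there is an interior zero coefficient
  have hex : ∃ k, 1 ≤ k ∧ k ≤ n₁+3 ∧ p.coeff k = 0 := by
    by_contra hno
    push_neg at hno
    have hsub : Finset.range (n₁+5) ⊆ p.support := by
      intro k hk
      rw [Finset.mem_range] at hk
      rw [mem_support_iff]
      rcases Nat.eq_zero_or_pos k with h0 | h1
      · rw [h0]; exact hc0
      · by_cases hk4 : k = n₁ + 4
        · rw [hk4]; exact hctop
        · exact hno k h1 (by omega)
    have := Finset.card_le_card hsub
    rw [Finset.card_range, h] at this
    omega
  obtain ⟨k, hk1, hk3, hkz⟩ := hex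
  rcases Nat.lt_or_ge k 2 with hklt | hkge
  · -- k = 1 : coefficient is 2 - m, so m = 2, n₁ = 0
    have hk : k = 1 := by omega
    rw [hk, hcoeff 1] at hkz
    simp at hkz
    -- hkz should give (m : ℚ) = 2
    have hm2 : (m : ℚ) = 2 := by linarith [hkz]
    have : m = 2 := by exact_mod_cast hm2
    have hn0 : n₁ = 0 := by omega
    rw [hn0]
    exact ⟨2, rfl⟩
  · -- k = j + 2 with j + 1 ≤ m
    obtain ⟨j, rfl⟩ : ∃ j, k = j + 2 := ⟨k - 2, by omega⟩
    have hjm : j + 1 ≤ m := by omega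
    rw [hcoeff (j+2), if_pos (by omega : 1 ≤ j+2), if_pos (by omega : 2 ≤ j+2),
      show j+2-1 = j+1 from rfl, show j+2-2 = j from rfl] at hkz
    set A : ℚ := (m.choose j : ℚ) with hA
    set B : ℚ := (m.choose (j+1) : ℚ) with hB
    set D : ℚ := (m.choose (j+2) : ℚ) with hD
    have hz' : ((-1:ℚ))^j * (D - 2*B + A) = 0 := by
      rw [show ((-1:ℚ))^(j+2) = (-1:ℚ)^j by rw [pow_add]; norm_num,
        show ((-1:ℚ))^(j+1) = -((-1:ℚ))^j by rw [pow_add]; norm_num] at hkz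
      linear_combination hkz
    have h9 : D - 2*B + A = 0 := by
      rcases mul_eq_zero.1 hz' with hc | hc
      · exact absurd hc (pow_ne_zero _ (by norm_num))
      · exact hc
    -- binomial identities
    have hidA : B * ((j:ℚ)+1) = A * ((m:ℚ) - j) := by
      have := Nat.choose_succ_right_eq m j
      have hcast : ((m - j : ℕ) : ℚ) = (m:ℚ) - j := by
        rw [Nat.cast_sub (by omega : j ≤ m)]
      rw [hA, hB, ← hcast]
      exact_mod_cast this
    have hidD : D * ((j:ℚ)+2) = B * ((m:ℚ) - j - 1) := by
      have := Nat.choose_succ_right_eq m (j+1)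
      have hcast : ((m - (j+1) : ℕ) : ℚ) = (m:ℚ) - j - 1 := by
        rw [Nat.cast_sub (by omega : j + 1 ≤ m)]; push_cast; ring
      rw [hD, hB, ← hcast]
      exact_mod_cast this
    have hBne : B ≠ 0 := by
      rw [hB]
      exact_mod_cast Nat.cast_ne_zero.mpr (Nat.choose_pos hjm).ne'
    have hkey : B * (((m:ℚ) - 2*j - 2)^2 - ((m:ℚ) + 2)) = 0 := by
      linear_combination ((j:ℚ)+2)*((m:ℚ)-j) * h9 - ((m:ℚ)-j) * hidD + ((j:ℚ)+2) * hidA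
    have hfin : ((m:ℚ) - 2*j - 2)^2 = (m:ℚ) + 2 := by
      rcases mul_eq_zero.1 hkey with hc | hc
      · exact absurd hc hBne
      · linarith [hc]
    -- transfer to ℤ and conclude
    set a : ℤ := (m:ℤ) - 2*j - 2 with ha
    have haz : a^2 = ((n₁ + 4 : ℕ) : ℤ) := by
      have : ((a:ℚ))^2 = ((n₁ + 4 : ℕ) : ℚ) := by push_cast [ha, hm]; push_cast [hm] at hfin; linarith [hfin]
      exact_mod_cast this
    refine ⟨a.natAbs, ?_⟩
    have : ((n₁ + 4 : ℕ) : ℤ) = (↑(a.natAbs * a.natAbs) : ℤ) := by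
      rw [Int.natAbs_mul_self, ← haz]
      ring
    exact_mod_cast this
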